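/- Monotonicity implies the Individual-Global-Max (IGM) property: if Q_joint(u₁,...,u_m) = F(Q₁(u₁),...,Q_m(u_m)) where F : ℝ^m → ℝ is strictly increasing in each coordinate, then the joint action maximizing Q_joint is obtained by each agent independently maximizing its own Q_i, i.e., argmax over the joint action space of Q_joint equals the tuple of individual argmaxes (assuming each argmax is attained and unique). -/

import Mathlib

lemma F_mono_aux {m : ℕ} (F : (Fin m → ℝ) → ℝ)
    (hF : ∀ (x x' : Fin m → ℝ) (i : Fin m),
      x i < x' i → (∀ j, j ≠ i → x j = x' j) → F x < F x') :
    ∀ s : Finset (Fin m), ∀ x y : Fin m → ℝ,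
      (∀ j, x j ≤ y j) → (∀ j ∉ s, x j = y j) → F x ≤ F y := by
  intro s
  induction s using Finset.induction_on with
  | empty =>
    intro x y _ h
    have : x = y := funext fun j => h j (by simp)
    rw [this]
  | @insert i s hi ih =>
    intro x y hle heq
    set z := Function.update x i (y i) with hz
    have h1 : F x ≤ F z := by
      rcases lt_or_eq_of_le (hle i) with h | h
      · exact le_of_lt (hF x z i (by simp [hz, h]) (fun j hj => by simp [hz, Function.update_of_ne hj]))
      · have : z = x := by
          funext j
          by_cases hji : j = i
          · subst hji; simp [hz, h]
          · simp [hz, Function.update_of_ne hji]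
        rw [this]
    have h2 : F z ≤ F y := by
      apply ih
      · intro j
        by_cases hji : j = i
        · subst hji; simp [hz]
        · simp [hz, Function.update_of_ne hji, hle j]
      · intro j hj
        by_cases hji : j = i
        · subst hji; simp [hz]
        · have : j ∉ insert i s := by simp [hji, hj]
          simp [hz, Function.update_of_ne hji, heq j this]
    exact le_trans h1 h2

/-- Monotonicity implies IGM: if `F` is strictly increasing in each coordinate and
each `Q i` has a unique maximizer `ustar i`, then `ustar` is the unique maximizer of
the joint value `F (fun i => Q i (u i))`: any joint action `u` is a maximizer of the
joint value iff `u = ustar`. -/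
theorem monotone_implies_IGM {m : ℕ} {U : Fin m → Type*}
    [∀ i, Fintype (U i)] [∀ i, Nonempty (U i)]
    (Q : ∀ i, U i → ℝ) (F : (Fin m → ℝ) → ℝ)
    (hF : ∀ (x x' : Fin m → ℝ) (i : Fin m),
      x i < x' i → (∀ j, j ≠ i → x j = x' j) → F x < F x')
    (ustar : ∀ i, U i)
    (hstar : ∀ i, ∀ v : U i, v ≠ ustar i → Q i v < Q i (ustar i)) :
    ∀ u : ∀ i, U i,
      (∀ u' : ∀ i, U i, F (fun i => Q i (u' i)) ≤ F (fun i => Q i (u i)))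
        ↔ u = ustar := by
  intro u
  have hQle : ∀ (w : ∀ i, U i) (i : Fin m), Q i (w i) ≤ Q i (ustar i) := by
    intro w i
    by_cases h : w i = ustar i
    · rw [h]
    · exact le_of_lt (hstar i (w i) h)
  constructor
  · intro hmax
    by_contra hne
    obtain ⟨i, hi⟩ : ∃ i, u i ≠ ustar i := by
      by_contra h
      push_neg at h
      exact hne (funext h)
    set x := fun j => Q j (u j) with hx
    set z := Function.update x i (Q i (ustar i)) with hz
    have h1 : F x < F z :=
      hF x z i (by simp [hz, hx, hstar i (u i) hi])
        (fun j hj => by simp [hz, Function.update_of_ne hj])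
    have h2 : F z ≤ F (fun j => Q j (ustar j)) := by
      apply F_mono_aux F hF Finset.univ
      · intro j
        by_cases hji : j = i
        · subst hji; simp [hz]
        · simp [hz, hx, Function.update_of_ne hji, hQle u j]
      · intro j hj; simp at hj
    have := hmax ustar
    have : F x < F x := lt_of_lt_of_le h1 (le_trans h2 this)
    exact absurd this (lt_irrefl _)
  · rintro rfl
    intro u'
    exact F_mono_aux F hF Finset.univ _ _ (hQle u') (by simp)
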